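/- Let M = Σ_{i=0}^k ξ_i·D^i be an x-symmetry driver for the equation u_{xy} = F and let W ∈ 𝓕 be an x-integral. Write the composition W_* ∘ M in normal form Σ_i μ_i·D^i with μ_i ∈ R. Then D̄(μ_i) = 0 for every i (every coefficient is an x-integral); in particular the operator L = W_* ∘ M maps x-integrals to x-integrals. -/
import Mathlib


open MvPolynomial

noncomputable section

/-- Variables of the ring R = K[x, y, u₀, u₁, …, ū₁, ū₂, …].
`Var.ubar j` denotes the variable ū_{j+1}, so that `Var.ubar 0 = ū₁`. -/
inductive Var : Type
  | x : Var
  | y : Var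
  | u : ℕ → Var
  | ubar : ℕ → Var
  deriving DecidableEq

/-- The ring R. -/
abbrev RR (K : Type*) [CommSemiring K] : Type _ := MvPolynomial Var K

variable {K : Type*} [Field K] [CharZero K]

/-- The subring 𝓕 ⊆ R of polynomials not involving any ū_j. -/
def Fcal (K : Type*) [CommSemiring K] : Subalgebra K (RR K) :=
  MvPolynomial.supported K {v : Var | ∀ j : ℕ, v ≠ Var.ubar j}

/-- The set of variables that F may involve: x, y, u₀, u₁, ū₁. -/
def Fvars : Set Var := {Var.x, Var.y, Var.u 0, Var.u 1, Var.ubar 0}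

/-- `D` and `Dbar` are the total derivatives with respect to x and y on solutions
of u_{xy} = F, i.e. the K-derivations determined by mutual recursion by
D(x) = 1, D(y) = 0, D(uᵢ) = u_{i+1}, D(ū_i) = D̄^{i-1}(F) (i ≥ 1);
D̄(y) = 1, D̄(x) = 0, D̄(u₀) = ū₁, D̄(u_i) = D^{i-1}(F) (i ≥ 1), D̄(ū_i) = ū_{i+1}.
(Recall `Var.ubar j` denotes ū_{j+1}.)  -/
structure IsTotalDerPair (F : RR K) (D Dbar : Derivation K (RR K) (RR K)) : Prop where
  hDx : D (X Var.x) = 1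
  hDy : D (X Var.y) = 0
  hDu : ∀ i : ℕ, D (X (Var.u i)) = X (Var.u (i + 1))
  hDubar : ∀ j : ℕ, D (X (Var.ubar j)) = (⇑Dbar)^[j] F
  hDbary : Dbar (X Var.y) = 1
  hDbarx : Dbar (X Var.x) = 0
  hDbaru0 : Dbar (X (Var.u 0)) = X (Var.ubar 0)
  hDbaru : ∀ i : ℕ, Dbar (X (Var.u (i + 1))) = (⇑D)^[i] F
  hDbarubar : ∀ j : ℕ, Dbar (X (Var.ubar j)) = X (Var.ubar (j + 1))

/-- `g` is a symmetry of the equation u_{xy} = F: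
D(D̄(g)) − F_{u₁}·D(g) − F_{ū₁}·D̄(g) − F_{u₀}·g = 0. -/
def IsSymmetry (F : RR K) (D Dbar : Derivation K (RR K) (RR K)) (g : RR K) : Prop :=
  D (Dbar g) - pderiv (Var.u 1) F * D g - pderiv (Var.ubar 0) F * Dbar g
    - pderiv (Var.u 0) F * g = 0

/-- The differential operator Σ_{i=0}^k ξ_i·Df^i applied to `a`. -/
def opApply {A : Type*} [CommRing A] (Df : A → A) (ξ : ℕ → A) (k : ℕ) (a : A) : A :=
  ∑ i ∈ Finset.range (k + 1), ξ i * Df^[i] a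

/-- `ξ 0, …, ξ k` are the coefficients of an x-symmetry driver of order `k`:
`ξ k ≠ 0` and Σ ξ_i·D^i maps every x-integral to a symmetry. -/
def IsDriver (F : RR K) (D Dbar : Derivation K (RR K) (RR K)) (k : ℕ) (ξ : ℕ → RR K) : Prop :=
  ξ k ≠ 0 ∧ ∀ W : RR K, Dbar W = 0 → IsSymmetry F D Dbar (opApply ⇑D ξ k W)

/-- The Fréchet derivative a_* = Σ_{i≥0} (∂a/∂uᵢ)·D^i applied to `g`. -/
def frechet (D : Derivation K (RR K) (RR K)) (a g : RR K) : RR K :=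
  ∑ᶠ i : ℕ, pderiv (Var.u i) a * (⇑D)^[i] g

/-- The Lie bracket [f, g] = g_*(f) − f_*(g). -/
def lieBracket (D : Derivation K (RR K) (RR K)) (f g : RR K) : RR K :=
  frechet D g f - frechet D f g


section Aux

set_option linter.unusedSectionVars false

variable {K : Type*} [Field K] [CharZero K]

lemma sum_deriv_apply {ι : Type*} (s : Finset ι)
    (d : ι → Derivation K (RR K) (RR K)) (p : RR K) :
    (∑ v ∈ s, d v) p = ∑ v ∈ s, d v p := by
  classical
  induction s using Finset.induction_on with
  | empty => simp [Derivation.zero_apply]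
  | @insert a s ha ih =>
    rw [Finset.sum_insert ha, Finset.sum_insert ha, Derivation.add_apply, ih]

lemma der_sum {ι : Type*} (d : Derivation K (RR K) (RR K)) (s : Finset ι) (f : ι → RR K) :
    d (∑ i ∈ s, f i) = ∑ i ∈ s, d (f i) := by
  classical
  induction s using Finset.induction_on with
  | empty => simp
  | @insert a s ha ih =>
    rw [Finset.sum_insert ha, Finset.sum_insert ha, Derivation.map_add, ih]

lemma deriv_apply_eq_sum (δ : Derivation K (RR K) (RR K)) (T : Finset Var) (p : RR K)
    (hp : p.vars ⊆ T) :
    δ p = ∑ v ∈ T, pderiv v p * δ (X v) := by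
  classical
  have h1 : δ p = (∑ v ∈ T, δ (X v) • (pderiv v : Derivation K (RR K) (RR K))) p := by
    refine derivation_eq_of_forall_mem_vars fun v hv => ?_
    rw [sum_deriv_apply, Finset.sum_eq_single v]
    · rw [Derivation.smul_apply, pderiv_X_self, smul_eq_mul, mul_one]
    · intro w _ hwv
      rw [Derivation.smul_apply, pderiv_X_of_ne (Ne.symm hwv), smul_zero]
    · exact fun hvT => absurd (hp hv) hvT
  rw [h1, sum_deriv_apply]
  exact Finset.sum_congr rfl fun v _ => by
    rw [Derivation.smul_apply, smul_eq_mul, mul_comm]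

instance : CharZero (RR K) :=
  ⟨fun a b hab => by
    have h := congrArg (constantCoeff (R := K) (σ := Var)) hab
    rw [map_natCast, map_natCast] at h
    exact Nat.cast_injective h⟩

/-- The variables x, y, ū₁ and all the u_i. -/
def S1 : Set Var :=
  {v | v = Var.x ∨ v = Var.y ∨ v = Var.ubar 0 ∨ ∃ i, v = Var.u i}

lemma Fvars_subset_S1 : Fvars ⊆ S1 := by
  intro v hv
  rcases hv with rfl | rfl | rfl | rfl | rfl
  · exact Or.inl rfl
  · exact Or.inr (Or.inl rfl)
  · exact Or.inr (Or.inr (Or.inr ⟨0, rfl⟩))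
  · exact Or.inr (Or.inr (Or.inr ⟨1, rfl⟩))
  · exact Or.inr (Or.inr (Or.inl rfl))

variable {F : RR K} {D Dbar : Derivation K (RR K) (RR K)}

lemma DDbar_comm (h : IsTotalDerPair F D Dbar) (p : RR K) :
    D (Dbar p) = Dbar (D p) := by
  have hz : ⁅D, Dbar⁆ = 0 := by
    refine derivation_ext fun v => ?_
    rw [Derivation.commutator_apply, Derivation.zero_apply]
    cases v with
    | x => rw [h.hDbarx, h.hDx, map_zero, Derivation.map_one_eq_zero, sub_zero]
    | y => rw [h.hDbary, h.hDy, map_zero, Derivation.map_one_eq_zero, zero_sub, neg_zero]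
    | u i =>
      cases i with
      | zero =>
        rw [h.hDbaru0, h.hDu, h.hDbaru 0, h.hDubar 0]
        simp
      | succ i =>
        rw [h.hDbaru i, h.hDu, h.hDbaru (i + 1),
          Function.iterate_succ_apply' (⇑D) i F, sub_self]
    | ubar j =>
      rw [h.hDbarubar j, h.hDubar j, h.hDubar (j + 1),
        Function.iterate_succ_apply' (⇑Dbar) j F, sub_self]
  have h2 : ⁅D, Dbar⁆ p = 0 := by rw [hz]; rfl
  rw [Derivation.commutator_apply] at h2
  exact sub_eq_zero.mp h2

lemma DDbar_comm_iter (h : IsTotalDerPair F D Dbar) (n : ℕ) (p : RR K) :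
    Dbar ((⇑D)^[n] p) = (⇑D)^[n] (Dbar p) := by
  induction n generalizing p with
  | zero => simp
  | succ n ih =>
    rw [Function.iterate_succ_apply' (⇑D) n p, ← DDbar_comm h, ih,
      ← Function.iterate_succ_apply' (⇑D) n (Dbar p)]

lemma D_stable (h : IsTotalDerPair F D Dbar)
    (hF : F ∈ MvPolynomial.supported K Fvars) :
    ∀ p ∈ MvPolynomial.supported K S1, D p ∈ MvPolynomial.supported K S1 := by
  intro p hp
  rw [supported_eq_adjoin_X] at hp
  induction hp using Algebra.adjoin_induction with
  | mem q hq =>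
    obtain ⟨v, hv, rfl⟩ := hq
    rcases hv with rfl | rfl | rfl | ⟨i, rfl⟩
    · rw [h.hDx]; exact one_mem _
    · rw [h.hDy]; exact zero_mem _
    · rw [h.hDubar 0]
      exact supported_mono Fvars_subset_S1 hF
    · rw [h.hDu i]
      exact X_mem_supported.mpr (Or.inr (Or.inr (Or.inr ⟨i + 1, rfl⟩)))
  | algebraMap r => rw [Derivation.map_algebraMap]; exact zero_mem _
  | add a b ha hb iha ihb => rw [Derivation.map_add]; exact add_mem iha ihb
  | mul a b ha hb iha ihb =>
    rw [Derivation.leibniz, smul_eq_mul, smul_eq_mul]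
    exact add_mem (mul_mem ha ihb) (mul_mem hb iha)

lemma D_iter_F_mem (h : IsTotalDerPair F D Dbar)
    (hF : F ∈ MvPolynomial.supported K Fvars) (i : ℕ) :
    (⇑D)^[i] F ∈ MvPolynomial.supported K S1 := by
  induction i with
  | zero => exact supported_mono Fvars_subset_S1 hF
  | succ i ih =>
    rw [Function.iterate_succ_apply']
    exact D_stable h hF _ ih

/-- The evolutionary vector field attached to a symmetry `g`. -/
def Efun (D Dbar : Derivation K (RR K) (RR K)) (g : RR K) : Var → RR K
  | Var.x => 0
  | Var.y => 0
  | Var.u i => (⇑D)^[i] g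
  | Var.ubar j => (⇑Dbar)^[j] (Dbar g)

def Eder (D Dbar : Derivation K (RR K) (RR K)) (g : RR K) : Derivation K (RR K) (RR K) :=
  mkDerivation K (Efun D Dbar g)

lemma Eder_X (g : RR K) (v : Var) : Eder D Dbar g (X v) = Efun D Dbar g v :=
  mkDerivation_X _ _ _

variable {g : RR K}

lemma Eder_F (h : IsTotalDerPair F D Dbar) (hF : F ∈ MvPolynomial.supported K Fvars)
    (hg : IsSymmetry F D Dbar g) :
    Eder D Dbar g F = D (Dbar g) := by
  classical
  have hT : F.vars ⊆ ({Var.x, Var.y, Var.u 0, Var.u 1, Var.ubar 0} : Finset Var) := by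
    intro v hv
    have hv2 : v ∈ Fvars := (mem_supported.mp hF) hv
    rcases hv2 with rfl | rfl | rfl | rfl | rfl <;> simp
  rw [deriv_apply_eq_sum (Eder D Dbar g) _ F hT]
  rw [Finset.sum_insert (by decide), Finset.sum_insert (by decide),
    Finset.sum_insert (by decide), Finset.sum_insert (by decide),
    Finset.sum_singleton]
  rw [Eder_X, Eder_X, Eder_X, Eder_X, Eder_X]
  show pderiv Var.x F * 0 + (pderiv Var.y F * 0 + (pderiv (Var.u 0) F * (⇑D)^[0] g +
    (pderiv (Var.u 1) F * (⇑D)^[1] g + pderiv (Var.ubar 0) F * (⇑Dbar)^[0] (Dbar g)))) = _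
  rw [Function.iterate_zero_apply, Function.iterate_one, Function.iterate_zero_apply]
  have hs := hg
  rw [IsSymmetry] at hs
  linear_combination -hs

lemma Eder_D_iter_F (h : IsTotalDerPair F D Dbar)
    (hF : F ∈ MvPolynomial.supported K Fvars) (hg : IsSymmetry F D Dbar g) (i : ℕ) :
    Eder D Dbar g ((⇑D)^[i] F) = (⇑D)^[i] (Eder D Dbar g F) := by
  induction i with
  | zero => rfl
  | succ i ih =>
    rw [Function.iterate_succ_apply' (⇑D) i F, Function.iterate_succ_apply' (⇑D) i]
    have hbr : ⁅Eder D Dbar g, D⁆ ((⇑D)^[i] F) = 0 := by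
      refine derivation_eqOn_supported (D₂ := 0) (s := S1) ?_ (D_iter_F_mem h hF i)
      intro v hv
      show ⁅Eder D Dbar g, D⁆ (X v) = (0 : Derivation K (RR K) (RR K)) (X v)
      rw [Derivation.zero_apply, Derivation.commutator_apply]
      rcases hv with rfl | rfl | rfl | ⟨i', rfl⟩
      · rw [h.hDx, Eder_X, Derivation.map_one_eq_zero]
        show (0 : RR K) - D 0 = 0
        rw [map_zero, sub_zero]
      · rw [h.hDy, Eder_X, map_zero]
        show (0 : RR K) - D 0 = 0
        rw [map_zero, sub_zero]
      · rw [h.hDubar 0, Eder_X]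
        show Eder D Dbar g ((⇑Dbar)^[0] F) - D ((⇑Dbar)^[0] (Dbar g)) = 0
        rw [Function.iterate_zero_apply, Function.iterate_zero_apply,
          Eder_F h hF hg, sub_self]
      · rw [h.hDu i', Eder_X, Eder_X]
        show (⇑D)^[i' + 1] g - D ((⇑D)^[i'] g) = 0
        rw [Function.iterate_succ_apply' (⇑D) i' g, sub_self]
    rw [Derivation.commutator_apply] at hbr
    have h2 : Eder D Dbar g (D ((⇑D)^[i] F)) = D (Eder D Dbar g ((⇑D)^[i] F)) := by
      exact sub_eq_zero.mp hbr
    rw [h2, ih]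

lemma Eder_Dbar_comm (h : IsTotalDerPair F D Dbar)
    (hF : F ∈ MvPolynomial.supported K Fvars) (hg : IsSymmetry F D Dbar g) (p : RR K) :
    Eder D Dbar g (Dbar p) = Dbar (Eder D Dbar g p) := by
  have hz : ⁅Eder D Dbar g, Dbar⁆ = 0 := by
    refine derivation_ext fun v => ?_
    rw [Derivation.commutator_apply, Derivation.zero_apply]
    cases v with
    | x =>
      rw [h.hDbarx, map_zero, Eder_X]
      show (0 : RR K) - Dbar 0 = 0
      rw [map_zero, sub_zero]
    | y =>
      rw [h.hDbary, Derivation.map_one_eq_zero, Eder_X]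
      show (0 : RR K) - Dbar 0 = 0
      rw [map_zero, sub_zero]
    | u i =>
      cases i with
      | zero =>
        rw [h.hDbaru0, Eder_X, Eder_X]
        show (⇑Dbar)^[0] (Dbar g) - Dbar ((⇑D)^[0] g) = 0
        rw [Function.iterate_zero_apply, Function.iterate_zero_apply, sub_self]
      | succ i =>
        rw [h.hDbaru i, Eder_X]
        show Eder D Dbar g ((⇑D)^[i] F) - Dbar ((⇑D)^[i + 1] g) = 0
        rw [Eder_D_iter_F h hF hg i, Eder_F h hF hg, DDbar_comm_iter h (i + 1) g,
          ← Function.iterate_succ_apply (⇑D) i (Dbar g), sub_self]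
    | ubar j =>
      rw [h.hDbarubar j, Eder_X, Eder_X]
      show (⇑Dbar)^[j + 1] (Dbar g) - Dbar ((⇑Dbar)^[j] (Dbar g)) = 0
      rw [Function.iterate_succ_apply' (⇑Dbar) j (Dbar g), sub_self]
  have h2 : ⁅Eder D Dbar g, Dbar⁆ p = 0 := by rw [hz]; rfl
  rw [Derivation.commutator_apply] at h2
  exact sub_eq_zero.mp h2

lemma Eder_eq_frechet {W : RR K} (hWF : W ∈ Fcal K) (g : RR K) :
    Eder D Dbar g W = frechet D W g := by
  classical
  set f : Var → ℕ := fun v => match v with | Var.u i => i + 1 | _ => 0 with hf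
  set N := W.vars.sup f with hN
  set T : Finset Var := insert Var.x (insert Var.y ((Finset.range N).image Var.u)) with hT
  have hWF' : (W.vars : Set Var) ⊆ {v : Var | ∀ j, v ≠ Var.ubar j} :=
    mem_supported.mp hWF
  have hvars : W.vars ⊆ T := by
    intro v hv
    cases v with
    | x => exact Finset.mem_insert_self _ _
    | y => exact Finset.mem_insert_of_mem (Finset.mem_insert_self _ _)
    | u i =>
      have hle : f (Var.u i) ≤ N := Finset.le_sup hv
      have : i + 1 ≤ N := hle
      refine Finset.mem_insert_of_mem (Finset.mem_insert_of_mem ?_)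
      exact Finset.mem_image.mpr ⟨i, Finset.mem_range.mpr (by omega), rfl⟩
    | ubar j => exact absurd rfl (hWF' hv j)
  rw [deriv_apply_eq_sum _ T W hvars, hT]
  rw [Finset.sum_insert (by simp), Finset.sum_insert (by simp)]
  rw [Finset.sum_image (fun a _ b _ hab => by simpa using hab)]
  rw [Eder_X, Eder_X]
  show pderiv Var.x W * 0 + (pderiv Var.y W * 0 + _) = _
  rw [mul_zero, mul_zero, zero_add, zero_add]
  rw [frechet, finsum_eq_sum_of_support_subset _
    (s := Finset.range N) ?_]
  · exact Finset.sum_congr rfl fun i _ => by rw [Eder_X]; rfl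
  · intro i hi
    simp only [Function.mem_support] at hi
    by_contra hc
    have hiN : ¬ i < N := by simpa using hc
    have : pderiv (Var.u i) W = 0 := by
      apply pderiv_eq_zero_of_notMem_vars
      intro hmem
      have : i + 1 ≤ N := Finset.le_sup (f := f) hmem
      omega
    rw [this, zero_mul] at hi
    exact hi rfl

end Aux

/-- writing L = W_* ∘ M (W an x-integral, M an x-symmetry driver) in
normal form Σ μ_i·D^i, all coefficients μ_i are x-integrals; in particular L maps
x-integrals to x-integrals. -/
theorem statement10
    (F : RR K) (hF : F ∈ MvPolynomial.supported K Fvars)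
    (D Dbar : Derivation K (RR K) (RR K)) (hDD : IsTotalDerPair F D Dbar)
    (k : ℕ) (ξ : ℕ → RR K) (hdrv : IsDriver F D Dbar k ξ)
    (W : RR K) (hWF : W ∈ Fcal K) (hWint : Dbar W = 0) :
    (∀ (m : ℕ) (μ : ℕ → RR K),
      (∀ a : RR K,
        frechet D W (opApply ⇑D ξ k a) = ∑ i ∈ Finset.range (m + 1), μ i * (⇑D)^[i] a) →
      ∀ i ≤ m, Dbar (μ i) = 0) ∧
    (∀ V : RR K, Dbar V = 0 → Dbar (frechet D W (opApply ⇑D ξ k V)) = 0) := by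
  classical
  have part2 : ∀ V : RR K, Dbar V = 0 → Dbar (frechet D W (opApply ⇑D ξ k V)) = 0 := by
    intro V hV
    have hg : IsSymmetry F D Dbar (opApply ⇑D ξ k V) := hdrv.2 V hV
    rw [← Eder_eq_frechet hWF, ← Eder_Dbar_comm hDD hF hg W, hWint, map_zero]
  refine ⟨?_, part2⟩
  intro m μ hμ i hi
  have hDbarxpow : ∀ n : ℕ, Dbar ((X Var.x : RR K) ^ n) = 0 := by
    intro n
    rw [Derivation.leibniz_pow, hDD.hDbarx, smul_zero, smul_zero]
  have hDiter : ∀ (j n : ℕ), (⇑D)^[j] ((X Var.x : RR K) ^ n)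
      = (n.descFactorial j : RR K) * X Var.x ^ (n - j) := by
    intro j
    induction j with
    | zero => intro n; simp
    | succ j ih =>
      intro n
      rw [Function.iterate_succ_apply', ih n]
      rw [Derivation.leibniz, Derivation.leibniz_pow, hDD.hDx, Derivation.map_natCast]
      simp only [smul_eq_mul, nsmul_eq_mul, mul_one, mul_zero, add_zero, smul_zero]
      rw [Nat.descFactorial_succ, ← Nat.sub_sub]
      push_cast
      ring
  have key : ∀ n, n ≤ m → Dbar (μ n) = 0 := by
    intro n
    induction n using Nat.strong_induction_on with
    | _ n ihn =>
      intro hn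
      have hd0 : Dbar (frechet D W (opApply ⇑D ξ k (X Var.x ^ n))) = 0 :=
        part2 _ (hDbarxpow n)
      rw [hμ (X Var.x ^ n), der_sum] at hd0
      have hterm : ∀ i' ∈ Finset.range (m + 1),
          Dbar (μ i' * (⇑D)^[i'] (X Var.x ^ n))
            = (n.descFactorial i' : RR K) * X Var.x ^ (n - i') * Dbar (μ i') := by
        intro i' _
        rw [hDiter i' n, Derivation.leibniz, Derivation.leibniz,
          Derivation.map_natCast, hDbarxpow]
        simp only [smul_eq_mul, mul_zero, zero_add, add_zero, zero_mul]
        try ring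
      rw [Finset.sum_congr rfl hterm] at hd0
      have hside : ∀ b ∈ Finset.range (m + 1), b ≠ n →
          (n.descFactorial b : RR K) * X Var.x ^ (n - b) * Dbar (μ b) = 0 := by
        intro b hb hbn
        rcases lt_or_gt_of_ne hbn with hlt | hgt
        · rw [ihn b hlt (by have := Finset.mem_range.mp hb; omega), mul_zero]
        · rw [Nat.descFactorial_eq_zero_iff_lt.mpr hgt, Nat.cast_zero, zero_mul, zero_mul]
      rw [Finset.sum_eq_single_of_mem n (Finset.mem_range.mpr (by omega)) hside] at hd0
      rw [Nat.descFactorial_self, Nat.sub_self, pow_zero, mul_one] at hd0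
      have hfac : ((n.factorial : ℕ) : RR K) ≠ 0 := Nat.cast_ne_zero.mpr (Nat.factorial_ne_zero n)
      exact (mul_eq_zero.mp hd0).resolve_left hfac
  exact key i hi
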